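/- arXiv:2208.00423 — 2 statements merged into one kernel-verified Lean document; each statement's English description precedes it below -/
import Mathlib

section
/- There exists a constant c ∈ ℕ and a partial computable function H such that for every binary string x, every d ∈ ℕ with C(C(x)|x) > d + c, and every program p of length at most d, H(x, C(x), p) is defined and equals 1 if U halts on input p and equals 0 otherwise. In other words, the pair (x, C(x)) solves the halting problem for all programs of length at most d whenever C(C(x)|x) > d + c. -/
/-- Conditional plain Kolmogorov complexity of `x` given `y`, with respect to the
machine `U` (which takes a pair (conditional input, program)). -/
noncomputable def condC (U : List Bool × List Bool →. List Bool) (x y : List Bool) : ℕ :=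
  sInf {k : ℕ | ∃ p : List Bool, p.length = k ∧ x ∈ U (y, p)}

/-- Plain (unconditional) Kolmogorov complexity with respect to `U`. -/
noncomputable def plainC (U : List Bool × List Bool →. List Bool) (x : List Bool) : ℕ :=
  condC U x []

/-- `U` is a partial computable, additively optimal (universal) machine. -/
def AdditivelyOptimal (U : List Bool × List Bool →. List Bool) : Prop :=
  Partrec U ∧
    ∀ V : List Bool × List Bool →. List Bool, Partrec V →
      ∃ c : ℕ, ∀ y p x, x ∈ V (y, p) →
        ∃ q : List Bool, x ∈ U (y, q) ∧ q.length ≤ p.length + c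

/-- The string of `n` zeros; `C(n)` is the complexity of this string. -/
def zeros (n : ℕ) : List Bool := List.replicate n false

/-- A natural number viewed as a binary string (for complexities like `C(C(x)|x)`). -/
def natStr (k : ℕ) : List Bool := k.bits

/-- The `i`-th binary digit of a real number. -/
noncomputable def binDigit (α : ℝ) (i : ℕ) : Bool :=
  decide (⌊α * 2 ^ (i + 1)⌋ % 2 = 1)

/-- The string of the first `n` binary digits of a real number. -/
noncomputable def binPrefix (α : ℝ) (n : ℕ) : List Bool :=
  (List.range n).map (binDigit α)

/-- `q` is a computable nondecreasing rational sequence converging to `α ∈ [0,1]`;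
this witnesses that `α` is a left c.e. real. -/
structure LeftCEApprox (α : ℝ) (q : ℕ → ℚ) : Prop where
  nonneg : 0 ≤ α
  le_one : α ≤ 1
  comp : Computable q
  mono : Monotone q
  tendsto : Filter.Tendsto (fun n => (q n : ℝ)) Filter.atTop (nhds α)

/-- Partial recursiveness relative to an oracle `g` (relativized `Nat.Partrec`). -/
inductive OracleRecursiveIn (g : ℕ →. ℕ) : (ℕ →. ℕ) → Prop
  | oracle : OracleRecursiveIn g g
  | zero : OracleRecursiveIn g (pure 0)
  | succ : OracleRecursiveIn g ↑Nat.succ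
  | left : OracleRecursiveIn g ↑fun n : ℕ => (Nat.unpair n).1
  | right : OracleRecursiveIn g ↑fun n : ℕ => (Nat.unpair n).2
  | pair {f h : ℕ →. ℕ} : OracleRecursiveIn g f → OracleRecursiveIn g h →
      OracleRecursiveIn g fun n => Nat.pair <$> f n <*> h n
  | comp {f h : ℕ →. ℕ} : OracleRecursiveIn g f → OracleRecursiveIn g h →
      OracleRecursiveIn g fun n => h n >>= f
  | prec {f h : ℕ →. ℕ} : OracleRecursiveIn g f → OracleRecursiveIn g h →
      OracleRecursiveIn g (Nat.unpaired fun a n =>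
        n.rec (f a) fun y IH => do let i ← IH; h (Nat.pair a (Nat.pair y i)))
  | rfind {f : ℕ →. ℕ} : OracleRecursiveIn g f →
      OracleRecursiveIn g fun a => Nat.rfind fun n => (fun m => m = 0) <$> f (Nat.pair a n)

/-- The binary digit sequence of a real, as an oracle. -/
noncomputable def digitOracle (α : ℝ) : ℕ →. ℕ :=
  fun n => Part.some (cond (binDigit α n) 1 0)

open Classical in
/-- The halting problem, as a (characteristic) function on codes of programs. -/
noncomputable def haltingFun : ℕ → ℕ := fun n =>
  if ((Denumerable.ofNat Nat.Partrec.Code n).eval n).Dom then 1 else 0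

/-- The halting problem is Turing reducible to the binary digit sequence of `α`. -/
def TuringComplete (α : ℝ) : Prop :=
  OracleRecursiveIn (digitOracle α) ↑haltingFun


section KolmAux
open Nat.Partrec (Code)
open Nat.Partrec.Code
open Encodable

theorem Nat.bits_eq (n : ℕ) : n.bits = if n = 0 then [] else n.bodd :: n.div2.bits := by
  split
  · simp [*, Nat.zero_bits]
  · rename_i h
    have h' : n.div2 = 0 → n.bodd = true := by
      intro h0
      cases hb : n.bodd
      · exfalso; apply h
        have := Nat.bodd_add_div2 n
        rw [hb, h0] at this
        simpa using this.symm
      · rfl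
    conv_lhs => rw [← Nat.bit_bodd_div2 n]
    rw [Nat.bits_append_bit _ _ h']

theorem primrec_bits : Primrec Nat.bits := by
  have hinner : Primrec (fun q : Unit × List (List Bool) =>
      if q.2.length = 0 then ([] : List Bool)
      else q.2.length.bodd :: q.2.getD q.2.length.div2 []) := by
    refine Primrec.ite ?_ (Primrec.const []) ?_
    · exact Primrec.eq.comp (Primrec.list_length.comp Primrec.snd) (Primrec.const 0)
    · exact Primrec.list_cons.comp (Primrec.nat_bodd.comp (Primrec.list_length.comp Primrec.snd))
        ((Primrec.list_getD []).comp Primrec.snd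
          (Primrec.nat_div2.comp (Primrec.list_length.comp Primrec.snd)))
  have hg : Primrec₂ (fun (_ : Unit) (l : List (List Bool)) =>
      (some (if l.length = 0 then [] else l.length.bodd :: l.getD l.length.div2 []) :
        Option (List Bool))) := (Primrec.option_some.comp hinner)
  have H := Primrec.nat_strong_rec (fun (_ : Unit) (n : ℕ) => Nat.bits n) hg ?_
  · exact H.comp (Primrec.const ()) Primrec.id
  · intro _ n
    cases n with
    | zero => simp [Nat.zero_bits]
    | succ m =>
      have hlt : (m+1).div2 < m + 1 := by
        rw [Nat.div2_val]; omega
      simp only [List.length_map, List.length_range, Option.some.injEq]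
      rw [Nat.bits_eq (m+1)]
      simp only [Nat.succ_ne_zero, if_false]
      congr 1
      rw [List.getD_eq_getElem?_getD, List.getElem?_map, List.getElem?_range hlt]
      rfl

def hitB (cU : Code) (x : List Bool) (k t n : ℕ) : Bool :=
  Option.casesOn (decode (α := List Bool) n) false fun p =>
    decide (evaln t cU (encode ((([] : List Bool), p))) = some (encode x)) && decide (p.length ≤ k)

def P1 (cU : Code) (x : List Bool) (k t : ℕ) : Bool :=
  (List.range t).foldl (fun b n => b || hitB cU x k t n) false

theorem foldl_or {f : ℕ → Bool} : ∀ (l : List ℕ) (b : Bool),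
    l.foldl (fun b n => b || f n) b = (b || l.any f)
  | [], b => by simp
  | n :: l, b => by simp [foldl_or l, Bool.or_assoc]

theorem P1_iff {cU : Code} {x : List Bool} {k t : ℕ} :
    P1 cU x k t = true ↔ ∃ n < t, hitB cU x k t n = true := by
  simp [P1, foldl_or, List.any_eq_true, List.mem_range]

theorem hitB_primrec {α} [Primcodable α] (cU : Code) {x : α → List Bool} {k t n : α → ℕ}
    (hx : Primrec x) (hk : Primrec k) (ht : Primrec t) (hn : Primrec n) :
    Primrec fun a => hitB cU (x a) (k a) (t a) (n a) := by
  have hEv : Primrec fun ap : α × List Bool =>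
      evaln (t ap.1) cU (encode ((([] : List Bool), ap.2))) :=
    primrec_evaln.comp ((((ht.comp Primrec.fst).pair (Primrec.const cU))).pair
      (Primrec.encode.comp ((Primrec.const ([] : List Bool)).pair Primrec.snd)))
  have hSome : Primrec fun ap : α × List Bool => (some (encode (x ap.1)) : Option ℕ) :=
    Primrec.option_some.comp (Primrec.encode.comp (hx.comp Primrec.fst))
  have hA : Primrec fun ap : α × List Bool =>
      decide (evaln (t ap.1) cU (encode ((([] : List Bool), ap.2))) = some (encode (x ap.1))) :=
    (Primrec.eq.comp hEv hSome).decide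
  have hB : Primrec fun ap : α × List Bool => decide (ap.2.length ≤ k ap.1) :=
    (Primrec.nat_le.comp (Primrec.list_length.comp Primrec.snd) (hk.comp Primrec.fst)).decide
  have hbody : Primrec₂ fun (a : α) (p : List Bool) =>
      (decide (evaln (t a) cU (encode ((([] : List Bool), p))) = some (encode (x a))) &&
        decide (p.length ≤ k a)) := Primrec.and.comp hA hB
  exact (Primrec.option_casesOn (Primrec.decode.comp hn) (Primrec.const false) hbody)

theorem P1_primrec {α} [Primcodable α] (cU : Code) {x : α → List Bool} {k t : α → ℕ}
    (hx : Primrec x) (hk : Primrec k) (ht : Primrec t) :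
    Primrec fun a => P1 cU (x a) (k a) (t a) := by
  have h := Primrec.list_foldl (f := fun a => List.range (t a)) (g := fun _ : α => false)
    (h := fun a (bn : Bool × ℕ) => bn.1 || hitB cU (x a) (k a) (t a) bn.2)
    (Primrec.list_range.comp ht) (Primrec.const false)
    ((Primrec.or.comp (Primrec.fst.comp Primrec.snd)
      (hitB_primrec cU (hx.comp Primrec.fst) (hk.comp Primrec.fst) (ht.comp Primrec.fst)
        (Primrec.snd.comp Primrec.snd))))
  exact h.of_eq fun a => rfl

theorem evalnIsSome_primrec {α} [Primcodable α] (cU : Code) {t : α → ℕ} {p : α → List Bool}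
    (ht : Primrec t) (hp : Primrec p) :
    Primrec fun a => (evaln (t a) cU (encode ((([] : List Bool), p a)))).isSome :=
  Primrec.option_isSome.comp (primrec_evaln.comp (((ht.pair (Primrec.const cU))).pair
    (Primrec.encode.comp ((Primrec.const ([] : List Bool)).pair hp))))

def Hfun (cU : Code) : List Bool × ℕ × List Bool →. ℕ := fun a =>
  (Nat.rfind fun t => Part.some (P1 cU a.1 a.2.1 t)).map fun t =>
    cond (evaln t cU (encode ((([] : List Bool), a.2.2)))).isSome 1 0

def Vfun (cU : Code) : List Bool × List Bool →. List Bool := fun a =>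
  (Nat.rfind fun s => Part.some (evaln s cU (encode ((([] : List Bool), a.2)))).isSome).bind
    fun s => (Nat.rfind fun m => Part.some (P1 cU a.1 m s)).map Nat.bits

theorem Hfun_partrec (cU : Code) : Partrec (Hfun cU) := by
  refine Partrec.map (Partrec.rfind ?_) ?_
  · have h : Computable₂ fun (a : List Bool × ℕ × List Bool) (t : ℕ) => P1 cU a.1 a.2.1 t :=
      (P1_primrec cU (x := fun q : (List Bool × ℕ × List Bool) × ℕ => q.1.1)
        (k := fun q => q.1.2.1) (t := fun q => q.2)
        (Primrec.fst.comp Primrec.fst) (Primrec.fst.comp (Primrec.snd.comp Primrec.fst))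
        Primrec.snd).to_comp
    exact h.partrec₂
  · have h : Primrec fun q : (List Bool × ℕ × List Bool) × ℕ =>
        cond (evaln q.2 cU (encode ((([] : List Bool), q.1.2.2)))).isSome 1 0 :=
      Primrec.cond (evalnIsSome_primrec cU Primrec.snd
        (Primrec.snd.comp (Primrec.snd.comp Primrec.fst)))
        (Primrec.const 1) (Primrec.const 0)
    exact h.to_comp

theorem Vfun_partrec (cU : Code) : Partrec (Vfun cU) := by
  refine Partrec.bind (Partrec.rfind ?_) ?_
  · have h : Computable₂ fun (a : List Bool × List Bool) (s : ℕ) =>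
        (evaln s cU (encode ((([] : List Bool), a.2)))).isSome :=
      (evalnIsSome_primrec cU (t := fun q : (List Bool × List Bool) × ℕ => q.2)
        (p := fun q => q.1.2) Primrec.snd (Primrec.snd.comp Primrec.fst)).to_comp
    exact h.partrec₂
  · refine Partrec.map (Partrec.rfind ?_) ?_
    · have h : Computable₂ fun (q : (List Bool × List Bool) × ℕ) (m : ℕ) =>
          P1 cU q.1.1 m q.2 :=
        (P1_primrec cU (x := fun r : ((List Bool × List Bool) × ℕ) × ℕ => r.1.1.1)
          (k := fun r => r.2) (t := fun r => r.1.2)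
          (Primrec.fst.comp (Primrec.fst.comp Primrec.fst)) Primrec.snd
          (Primrec.snd.comp Primrec.fst)).to_comp
      exact h.partrec₂
    · exact (primrec_bits.comp Primrec.snd).to_comp

end KolmAux

section MainProof
open Nat.Partrec (Code)
open Nat.Partrec.Code
open Encodable

open Classical in
/-- There is a constant `c` and a partial computable `H` such that whenever
`C(C(x)|x) > d + c`, the pair `(x, C(x))` solves the halting problem for all programs of
length at most `d`: `H(x, C(x), p)` is defined, and equals `1` if `U` halts on `p` and
`0` otherwise. -/
theorem pair_with_complexity_solves_halting
    (U : List Bool × List Bool →. List Bool) (hU : AdditivelyOptimal U) :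
    ∃ (c : ℕ) (H : List Bool × ℕ × List Bool →. ℕ), Partrec H ∧
      ∀ (x : List Bool) (d : ℕ) (p : List Bool),
        d + c < condC U (natStr (plainC U x)) x → p.length ≤ d →
          (if (U (([] : List Bool), p)).Dom then 1 else 0) ∈ H (x, plainC U x, p) := by
  obtain ⟨hUpr, hopt⟩ := hU
  obtain ⟨cU, hcU⟩ := Code.exists_code.1 hUpr
  have hevalU : ∀ (a : List Bool × List Bool), eval cU (encode a) = (U a).map encode := by
    intro a; rw [hcU]; simp [encodek]
  have mem_to_evaln : ∀ {a : List Bool × List Bool} {z : List Bool}, z ∈ U a →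
      ∃ s, evaln s cU (encode a) = some (encode z) := by
    intro a z hz
    have h1 : encode z ∈ eval cU (encode a) := by
      rw [hevalU]; exact Part.mem_map _ hz
    obtain ⟨s, hs⟩ := evaln_complete.1 h1
    exact ⟨s, hs⟩
  have evaln_to_mem : ∀ {a : List Bool × List Bool} {s m}, evaln s cU (encode a) = some m →
      ∃ z ∈ U a, encode z = m := by
    intro a s m h
    have h1 : m ∈ eval cU (encode a) := evaln_sound h
    rw [hevalU] at h1
    exact (Part.mem_map_iff _).1 h1
  have hit_sound : ∀ {x : List Bool} {k t n : ℕ}, hitB cU x k t n = true →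
      ∃ p : List Bool, p.length ≤ k ∧ x ∈ U (([] : List Bool), p) := by
    intro x k t n h
    unfold hitB at h
    rcases hd : (decode (α := List Bool) n) with _ | p
    · rw [hd] at h; simp at h
    · rw [hd] at h
      simp only [Bool.and_eq_true, decide_eq_true_eq] at h
      obtain ⟨h1, h2⟩ := h
      obtain ⟨z, hz, he⟩ := evaln_to_mem h1
      have hzx : z = x := encode_injective he
      exact ⟨p, h2, hzx ▸ hz⟩
  have hit_mono : ∀ {x : List Bool} {k t t' n : ℕ}, t ≤ t' → hitB cU x k t n = true →
      hitB cU x k t' n = true := by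
    intro x k t t' n htt' h
    unfold hitB at h ⊢
    rcases hd : (decode (α := List Bool) n) with _ | p
    · rw [hd] at h; simp at h
    · rw [hd] at h
      simp only [Bool.and_eq_true, decide_eq_true_eq] at h ⊢
      exact ⟨evaln_mono htt' h.1, h.2⟩
  have P1_sound : ∀ {x : List Bool} {k t : ℕ}, P1 cU x k t = true →
      ∃ p : List Bool, p.length ≤ k ∧ x ∈ U (([] : List Bool), p) := by
    intro x k t h
    obtain ⟨n, _, hh⟩ := P1_iff.1 h
    exact hit_sound hh
  have P1_mono : ∀ {x : List Bool} {k t t' : ℕ}, t ≤ t' → P1 cU x k t = true →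
      P1 cU x k t' = true := by
    intro x k t t' htt' h
    obtain ⟨n, hn, hh⟩ := P1_iff.1 h
    exact P1_iff.2 ⟨n, lt_of_lt_of_le hn htt', hit_mono htt' hh⟩
  have P1_complete : ∀ {x : List Bool} {k : ℕ} (p : List Bool), x ∈ U (([] : List Bool), p) →
      p.length ≤ k → ∃ t, P1 cU x k t = true := by
    intro x k p hx hlen
    obtain ⟨s, hs⟩ := mem_to_evaln hx
    refine ⟨max s (encode p) + 1, P1_iff.2 ⟨encode p, ?_, ?_⟩⟩
    · omega
    · unfold hitB
      rw [encodek]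
      simp only [Bool.and_eq_true, decide_eq_true_eq]
      exact ⟨evaln_mono (by omega) hs, hlen⟩
  obtain ⟨c, hc⟩ := hopt (Vfun cU) (Vfun_partrec cU)
  refine ⟨c, Hfun cU, Hfun_partrec cU, ?_⟩
  intro x d p h1 h2
  set k := plainC U x with hkdef
  -- the set of program lengths for x is nonempty
  have hidp : Partrec (fun a : List Bool × List Bool => (Part.some a.2 : Part (List Bool))) :=
    Computable.snd.partrec
  obtain ⟨c0, hc0⟩ := hopt _ hidp
  obtain ⟨q0, hq0, -⟩ := hc0 ([] : List Bool) x x (Part.mem_some x)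
  have hSne : {m : ℕ | ∃ q : List Bool, q.length = m ∧ x ∈ U (([] : List Bool), q)}.Nonempty :=
    ⟨q0.length, q0, rfl, hq0⟩
  have hkS : k ∈ {m : ℕ | ∃ q : List Bool, q.length = m ∧ x ∈ U (([] : List Bool), q)} :=
    Nat.sInf_mem hSne
  obtain ⟨qm, hqmlen, hqmmem⟩ := hkS
  have hk_le : ∀ (q : List Bool), x ∈ U (([] : List Bool), q) → k ≤ q.length := by
    intro q hq
    exact Nat.sInf_le ⟨q, rfl, hq⟩
  obtain ⟨t1, ht1⟩ := P1_complete qm hqmmem (le_of_eq hqmlen)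
  have hdom : (Nat.rfind fun t => Part.some (P1 cU x k t)).Dom :=
    Nat.rfind_dom.2 ⟨t1, by simp [ht1], fun {m} _ => trivial⟩
  set t₀ := (Nat.rfind fun t => Part.some (P1 cU x k t)).get hdom with ht₀def
  have ht₀mem : t₀ ∈ Nat.rfind fun t => Part.some (P1 cU x k t) := Part.get_mem hdom
  have hP1t₀ : P1 cU x k t₀ = true := (Part.mem_some_iff.1 (Nat.rfind_spec ht₀mem)).symm
  have hval : cond (evaln t₀ cU (encode ((([] : List Bool), p)))).isSome 1 0 ∈
      Hfun cU (x, k, p) := Part.mem_map _ ht₀mem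
  have hiff : (U (([] : List Bool), p)).Dom ↔
      (evaln t₀ cU (encode ((([] : List Bool), p)))).isSome = true := by
    constructor
    · intro hDom
      by_contra hnone
      have hsdom : (Nat.rfind fun s =>
          Part.some (evaln s cU (encode ((([] : List Bool), p)))).isSome).Dom := by
        obtain ⟨z, hz⟩ := Part.dom_iff_mem.1 hDom
        obtain ⟨s, hs⟩ := mem_to_evaln hz
        exact Nat.rfind_dom.2 ⟨s, Part.mem_some_iff.2 (by rw [hs]; rfl), fun {m} _ => trivial⟩
      set s₀ := (Nat.rfind fun s =>
          Part.some (evaln s cU (encode ((([] : List Bool), p)))).isSome).get hsdom with hs₀def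
      have hs₀mem : s₀ ∈ Nat.rfind fun s =>
          Part.some (evaln s cU (encode ((([] : List Bool), p)))).isSome := Part.get_mem hsdom
      have hs₀some : (evaln s₀ cU (encode ((([] : List Bool), p)))).isSome = true :=
        (Part.mem_some_iff.1 (Nat.rfind_spec hs₀mem)).symm
      have ht₀s₀ : t₀ ≤ s₀ := by
        by_contra hlt
        push_neg at hlt
        obtain ⟨m, hm⟩ := Option.isSome_iff_exists.1 hs₀some
        have : evaln t₀ cU (encode ((([] : List Bool), p))) = some m :=
          evaln_mono (le_of_lt hlt) hm
        exact hnone (by rw [this]; rfl)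
      have hP1s₀ : P1 cU x k s₀ = true := P1_mono ht₀s₀ hP1t₀
      have hmdom : (Nat.rfind fun m => Part.some (P1 cU x m s₀)).Dom :=
        Nat.rfind_dom.2 ⟨k, by simp [hP1s₀], fun {m} _ => trivial⟩
      set m₀ := (Nat.rfind fun m => Part.some (P1 cU x m s₀)).get hmdom with hm₀def
      have hm₀mem : m₀ ∈ Nat.rfind fun m => Part.some (P1 cU x m s₀) := Part.get_mem hmdom
      have hm₀le : m₀ ≤ k := by
        by_contra hgt
        push_neg at hgt
        have := Nat.rfind_min hm₀mem hgt
        rw [Part.mem_some_iff, hP1s₀] at this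
        exact Bool.false_ne_true this
      have hkle : k ≤ m₀ := by
        have hP1m₀ : P1 cU x m₀ s₀ = true :=
          (Part.mem_some_iff.1 (Nat.rfind_spec hm₀mem)).symm
        obtain ⟨q, hqlen, hqmem⟩ := P1_sound hP1m₀
        exact le_trans (hk_le q hqmem) hqlen
      have hm₀k : m₀ = k := le_antisymm hm₀le hkle
      have hVmem : natStr k ∈ Vfun cU (x, p) := by
        refine Part.mem_bind hs₀mem ?_
        rw [← hm₀k]
        exact Part.mem_map _ hm₀mem
      obtain ⟨q', hq'mem, hq'len⟩ := hc x p (natStr k) hVmem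
      have hcle : condC U (natStr k) x ≤ q'.length := Nat.sInf_le ⟨q', rfl, hq'mem⟩
      omega
    · intro hsome
      obtain ⟨m, hm⟩ := Option.isSome_iff_exists.1 hsome
      obtain ⟨z, hz, -⟩ := evaln_to_mem hm
      exact Part.dom_iff_mem.2 ⟨z, hz⟩
  by_cases hDom : (U (([] : List Bool), p)).Dom
  · rw [if_pos hDom]
    have hs := hiff.1 hDom
    rw [hs] at hval
    simpa using hval
  · rw [if_neg hDom]
    have hs : (evaln t₀ cU (encode ((([] : List Bool), p)))).isSome = false := by
      rw [← Bool.not_eq_true]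
      exact fun h => hDom (hiff.2 h)
    rw [hs] at hval
    simpa using hval

end MainProof
end

section
/- There exists a constant c ∈ ℕ and a partial computable function B such that for every binary string x and every d ∈ ℕ with C(C(x)|x) > d + c, B(x, C(x), d) is defined and is greater than or equal to the number of steps taken by U on every program p of length at most d on which U halts. In other words, the pair (x, C(x)) solves the busy beaver problem up to length d whenever C(C(x)|x) > d + c. -/
/-- Evaluation of a `Nat.Partrec.Code` as a machine on pairs
(conditional input, program) of binary strings. -/
def codeEval (c : Nat.Partrec.Code) : List Bool × List Bool →. List Bool :=
  fun yp => (c.eval (Encodable.encode yp)).bind fun m =>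
    Part.ofOption (Encodable.decode (α := List Bool) m)

section BBAux

open Nat.Partrec (Code)
open Nat.Partrec.Code
open Encodable

theorem primrec_list_any {α β : Type} [Primcodable α] [Primcodable β]
    {f : α → List β} {p : α → β → Bool} (hf : Primrec f) (hp : Primrec₂ p) :
    Primrec fun a => (f a).any (p a) :=
  (Primrec.list_foldr hf (Primrec.const false)
    (Primrec.to₂ (Primrec.cond (hp.comp Primrec.fst (Primrec.fst.comp Primrec.snd))
      (Primrec.const true) (Primrec.snd.comp Primrec.snd)))).of_eq fun a => by
    induction f a with
    | nil => rfl
    | cons b l ih => rw [List.foldr_cons, List.any_cons, ih]; cases p a b <;> simp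

theorem natStr_eq_cons (n : ℕ) (hn : n ≠ 0) : natStr n = n.bodd :: natStr n.div2 := by
  cases hb : n.bodd
  · have h : 2 * n.div2 = n := by
      have := Nat.bodd_add_div2 n; rw [hb] at this; simpa using this
    have hd : n.div2 ≠ 0 := by intro h0; rw [h0] at h; omega
    unfold natStr
    conv_lhs => rw [← h]
    exact Nat.bit0_bits _ hd
  · have h : 2 * n.div2 + 1 = n := by
      have := Nat.bodd_add_div2 n; rw [hb] at this; simp at this; omega
    unfold natStr
    conv_lhs => rw [← h]
    exact Nat.bit1_bits _

theorem natStr_primrec : Primrec natStr := by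
  have key : Primrec₂ (fun (_ : Unit) (n : ℕ) => natStr n) := by
    apply Primrec.nat_strong_rec (g := fun (_ : Unit) (prev : List (List Bool)) =>
      if prev.length = 0 then some []
      else (prev[prev.length.div2]?).map fun l => prev.length.bodd :: l)
    · have hlen : Primrec fun z : Unit × List (List Bool) => z.2.length :=
        Primrec.list_length.comp Primrec.snd
      exact Primrec.to₂ (Primrec.ite (Primrec.eq.comp hlen (Primrec.const 0))
        (Primrec.const (some []))
        (Primrec.option_map
          (Primrec.list_getElem?.comp Primrec.snd (Primrec.nat_div2.comp hlen))
          (Primrec.to₂ (Primrec.list_cons.comp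
            (Primrec.nat_bodd.comp (hlen.comp Primrec.fst)) Primrec.snd))))
    · intro _ n
      rcases eq_or_ne n 0 with rfl | hn
      · simp [natStr]
      · have hlt : n.div2 < n := by
          rw [Nat.div2_val]; exact Nat.div_lt_self (Nat.pos_of_ne_zero hn) one_lt_two
        simp only [List.length_map, List.length_range, if_neg hn]
        rw [List.getElem?_map, List.getElem?_range hlt]
        simp [natStr_eq_cons n hn]
  exact (key.comp (Primrec.const ()) Primrec.id).of_eq fun n => rfl

/-- `cand c x n t = true` iff some program `q` of length `n` with code `< t`
outputs `x` within `t` steps on machine `c` (with empty conditional input). -/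
def cand (c : Code) (x : List Bool) (n t : ℕ) : Bool :=
  (List.range t).any fun j =>
    decide (((Encodable.decode (α := List Bool) j).bind fun q =>
      if q.length = n then
        (Nat.Partrec.Code.evaln t c (Encodable.encode ((([] : List Bool), q)))).bind
          fun v => Encodable.decode (α := List Bool) v
      else none) = some x)

theorem cand_iff {c : Code} {x : List Bool} {n t : ℕ} : cand c x n t = true ↔
    ∃ j < t, ∃ q : List Bool, Encodable.decode j = some q ∧ q.length = n ∧
      ((Nat.Partrec.Code.evaln t c (Encodable.encode ((([] : List Bool), q)))).bind
        fun v => Encodable.decode (α := List Bool) v) = some x := by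
  simp only [cand, List.any_eq_true, List.mem_range, decide_eq_true_eq]
  constructor
  · rintro ⟨j, hj, h⟩
    rcases hdj : Encodable.decode (α := List Bool) j with _ | q
    · rw [hdj] at h; simp at h
    · rw [hdj] at h
      simp only [Option.bind_some] at h
      by_cases hl : q.length = n
      · exact ⟨j, hj, q, hdj, hl, by rwa [if_pos hl] at h⟩
      · rw [if_neg hl] at h; simp at h
  · rintro ⟨j, hj, q, hdj, hl, h⟩
    refine ⟨j, hj, ?_⟩
    rw [hdj]
    simp only [Option.bind_some, if_pos hl]
    exact h

theorem cand_primrec {α : Type} [Primcodable α] (c : Code) {f : α → List Bool}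
    {g h : α → ℕ} (hf : Primrec f) (hg : Primrec g) (hh : Primrec h) :
    Primrec fun a => cand c (f a) (g a) (h a) := by
  unfold cand
  have hbody : Primrec fun w : (α × ℕ) × List Bool =>
      if w.2.length = g w.1.1 then
        (Nat.Partrec.Code.evaln (h w.1.1) c
          (Encodable.encode ((([] : List Bool), w.2)))).bind
          fun v => Encodable.decode (α := List Bool) v
      else none := by
    apply Primrec.ite
      (Primrec.eq.comp (Primrec.list_length.comp Primrec.snd)
        (hg.comp (Primrec.fst.comp Primrec.fst)))
    · apply Primrec.option_bind
      · exact Nat.Partrec.Code.primrec_evaln.comp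
          ((((hh.comp (Primrec.fst.comp Primrec.fst)).pair (Primrec.const c))).pair
            (Primrec.encode.comp ((Primrec.const ([] : List Bool)).pair Primrec.snd)))
      · exact (Primrec.decode.comp Primrec.snd).to₂
    · exact Primrec.const none
  have hinner : Primrec fun z : α × ℕ =>
      (Encodable.decode (α := List Bool) z.2).bind fun q =>
        if q.length = g z.1 then
          (Nat.Partrec.Code.evaln (h z.1) c
            (Encodable.encode ((([] : List Bool), q)))).bind
            fun v => Encodable.decode (α := List Bool) v
        else none :=
    Primrec.option_bind (Primrec.decode.comp Primrec.snd) hbody.to₂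
  have hp : Primrec₂ (fun (a : α) (j : ℕ) => decide
      (((Encodable.decode (α := List Bool) j).bind fun q =>
        if q.length = g a then
          (Nat.Partrec.Code.evaln (h a) c
            (Encodable.encode ((([] : List Bool), q)))).bind
            fun v => Encodable.decode (α := List Bool) v
        else none) = some (f a))) :=
    (Primrec.eq.comp hinner (Primrec.option_some.comp (hf.comp Primrec.fst))).decide.to₂
  exact primrec_list_any (Primrec.list_range.comp hh) hp

/-- Step-bounded halting check for a program. -/
def haltb (c : Code) (p : List Bool) (k : ℕ) : Bool :=
  (Nat.Partrec.Code.evaln k c (Encodable.encode ((([] : List Bool), p)))).isSome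

theorem haltb_primrec {α : Type} [Primcodable α] (c : Code) {f : α → List Bool}
    {g : α → ℕ} (hf : Primrec f) (hg : Primrec g) :
    Primrec fun a => haltb c (f a) (g a) :=
  Primrec.option_isSome.comp (Nat.Partrec.Code.primrec_evaln.comp
    ((hg.pair (Primrec.const c)).pair
      (Primrec.encode.comp ((Primrec.const ([] : List Bool)).pair hf))))

/-- The busy-beaver style function `B`. -/
def BBfun (c : Code) : List Bool × ℕ × ℕ →. ℕ :=
  fun a => Nat.rfind fun t => Part.some (cand c a.1 a.2.1 t)

theorem BBfun_partrec (c : Code) : Partrec (BBfun c) := by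
  apply Partrec.rfind
  exact (cand_primrec c (Primrec.fst.comp Primrec.fst)
    ((Primrec.fst.comp Primrec.snd).comp Primrec.fst) Primrec.snd).to_comp

/-- The machine witnessing `C(C(x)|x) ≤ d + O(1)` when busy beaver fails. -/
def Vm (c : Code) : List Bool × List Bool →. List Bool :=
  fun yp =>
    (Nat.rfind fun k => Part.some (haltb c yp.2 k)).bind fun t =>
      (Nat.rfind fun m => Part.some (cand c yp.1 m t)).map natStr

theorem Vm_partrec (c : Code) : Partrec (Vm c) := by
  apply Partrec.bind
  · exact Partrec.rfind
      (haltb_primrec c (Primrec.snd.comp Primrec.fst) Primrec.snd).to_comp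
  · apply Partrec.map
    · exact Partrec.rfind
        (cand_primrec c ((Primrec.fst.comp Primrec.fst).comp Primrec.fst)
          Primrec.snd (Primrec.snd.comp Primrec.fst)).to_comp
    · exact (natStr_primrec.comp Primrec.snd).to_comp.to₂

theorem mem_codeEval {c : Code} {y q x : List Bool} :
    x ∈ codeEval c (y, q) ↔ ∃ v : ℕ, v ∈ c.eval (Encodable.encode (y, q)) ∧
      Encodable.decode (α := List Bool) v = some x := by
  simp [codeEval, Part.mem_bind_iff, Part.mem_ofOption, Option.mem_def]

theorem exists_prog {c : Code} (hU : AdditivelyOptimal (codeEval c))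
    (y x : List Bool) : ∃ q : List Bool, x ∈ codeEval c (y, q) := by
  have hV : Partrec (fun yp : List Bool × List Bool => Part.some yp.2) :=
    Computable.snd
  obtain ⟨c₀, hc₀⟩ := hU.2 _ hV
  obtain ⟨q, hq, -⟩ := hc₀ y x x (Part.mem_some x)
  exact ⟨q, hq⟩

theorem encode_le_encode_pair (q : List Bool) :
    Encodable.encode q ≤ Encodable.encode ((([] : List Bool), q)) := by
  rw [Encodable.encode_prod_val]
  exact Nat.right_le_pair _ _

end BBAux

/-- There is a constant `c` and a partial computable `B` such that whenever
`C(C(x)|x) > d + c`, `B(x, C(x), d)` is defined and bounds the number of steps taken by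
the universal machine on every halting program of length at most `d` (busy beaver up to
length `d`). -/
theorem pair_with_complexity_solves_busy_beaver
    (cU : Nat.Partrec.Code) (hU : AdditivelyOptimal (codeEval cU)) :
    ∃ (c : ℕ) (B : List Bool × ℕ × ℕ →. ℕ), Partrec B ∧
      ∀ (x : List Bool) (d : ℕ),
        d + c < condC (codeEval cU) (natStr (plainC (codeEval cU) x)) x →
          ∃ m ∈ B (x, plainC (codeEval cU) x, d),
            ∀ p : List Bool, p.length ≤ d →
              (cU.eval (Encodable.encode ((([] : List Bool), p)))).Dom →
                ∃ k ≤ m,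
                  (Nat.Partrec.Code.evaln k cU
                    (Encodable.encode ((([] : List Bool), p)))).isSome := by
  classical
  obtain ⟨c, hc⟩ := hU.2 (Vm cU) (Vm_partrec cU)
  refine ⟨c, BBfun cU, BBfun_partrec cU, ?_⟩
  intro x d hd
  set n := plainC (codeEval cU) x with hn
  -- a shortest program q⋆ for x
  have hSne : {k : ℕ | ∃ p : List Bool, p.length = k ∧ x ∈ codeEval cU ([], p)}.Nonempty := by
    obtain ⟨q, hq⟩ := exists_prog hU [] x
    exact ⟨q.length, q, rfl, hq⟩
  have hnS : n ∈ {k : ℕ | ∃ p : List Bool, p.length = k ∧ x ∈ codeEval cU ([], p)} :=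
    Nat.sInf_mem hSne
  obtain ⟨qs, hqslen, hqsmem⟩ := hnS
  obtain ⟨v, hv, hvd⟩ := mem_codeEval.mp hqsmem
  obtain ⟨k, hk⟩ := Nat.Partrec.Code.evaln_complete.mp hv
  -- `cand cU x n k` holds
  have hqlt : Encodable.encode qs < k :=
    lt_of_le_of_lt (encode_le_encode_pair qs) (Nat.Partrec.Code.evaln_bound hk)
  have hcand : cand cU x n k = true := by
    refine cand_iff.mpr ⟨Encodable.encode qs, hqlt, qs, Encodable.encodek qs, hqslen, ?_⟩
    rw [Option.mem_def.mp hk]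
    simpa using hvd
  obtain ⟨m, hm, -⟩ := Nat.rfind_min' hcand
  have hmB : m ∈ BBfun cU (x, n, d) := hm
  refine ⟨m, hmB, ?_⟩
  intro p hpd hpDom
  by_contra hcon
  push_neg at hcon
  -- minimal halting time t₀ of p
  obtain ⟨k₁, hk₁⟩ := Nat.Partrec.Code.evaln_complete.mp (Part.get_mem hpDom)
  have hhalt : haltb cU p k₁ = true := by
    simp [haltb, Option.isSome_iff_exists]
    exact ⟨_, Option.mem_def.mp hk₁⟩
  obtain ⟨t₀, ht₀, -⟩ := Nat.rfind_min' hhalt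
  have ht₀spec : haltb cU p t₀ = true := by
    have := Nat.rfind_spec ht₀
    simpa using this
  have hmt : m < t₀ := by
    by_contra hle
    push_neg at hle
    exact hcon t₀ hle (by simpa [haltb] using ht₀spec)
  -- cand holds at t₀
  have hcandm : cand cU x n m = true := by
    have := Nat.rfind_spec hm
    simpa using this
  obtain ⟨j, hjm, q, hdj, hql, hbind⟩ := cand_iff.mp hcandm
  obtain ⟨v', hev', hdv'⟩ := Option.bind_eq_some_iff.mp hbind
  have hev't₀ : Nat.Partrec.Code.evaln t₀ cU
      (Encodable.encode ((([] : List Bool), q))) = some v' :=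
    Nat.Partrec.Code.evaln_mono (le_of_lt hmt) hev'
  have hcandt₀ : cand cU x n t₀ = true := by
    refine cand_iff.mpr ⟨j, lt_trans hjm hmt, q, hdj, hql, ?_⟩
    rw [hev't₀]
    simpa using hdv'
  -- minimal n₂ with cand at time t₀ equals n
  obtain ⟨n₂, hn₂, hn₂le⟩ := Nat.rfind_min' (p := fun n' => cand cU x n' t₀) hcandt₀
  have hcandn₂ : cand cU x n₂ t₀ = true := by
    have := Nat.rfind_spec hn₂
    simpa using this
  obtain ⟨j', -, q', -, hq'l, hbind'⟩ := cand_iff.mp hcandn₂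
  obtain ⟨v'', hev'', hdv''⟩ := Option.bind_eq_some_iff.mp hbind'
  have hq'mem : x ∈ codeEval cU ([], q') :=
    mem_codeEval.mpr ⟨v'', Nat.Partrec.Code.evaln_sound (Option.mem_def.mpr hev''), hdv''⟩
  have hlen₂ : n ≤ n₂ := by
    have : n₂ ∈ {k : ℕ | ∃ p : List Bool, p.length = k ∧ x ∈ codeEval cU ([], p)} :=
      ⟨q', hq'l, hq'mem⟩
    exact Nat.sInf_le this
  have hn₂eq : n₂ = n := le_antisymm hn₂le hlen₂
  -- natStr n ∈ Vm cU (x, p)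
  have hVmem : natStr n ∈ Vm cU (x, p) := by
    refine Part.mem_bind_iff.mpr ⟨t₀, ht₀, ?_⟩
    exact (Part.mem_map_iff natStr).mpr ⟨n₂, hn₂, by rw [hn₂eq]⟩
  obtain ⟨q'', hq''mem, hq''len⟩ := hc x p (natStr n) hVmem
  have hcond : condC (codeEval cU) (natStr n) x ≤ q''.length :=
    Nat.sInf_le ⟨q'', rfl, hq''mem⟩
  have hq''len' : q''.length ≤ d + c := le_trans hq''len (by omega)
  omega
end
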